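/- Let x be a random vector in R^d with sup_{‖v‖₂=1} E[⟨x,v⟩⁴] ≤ ν, and define the norm-truncation x̃ = (√d x/‖x‖₂)·((‖x‖₂/√d) ∧ τ). Then for any unit vectors u, w ∈ R^d, |E[⟨x,u⟩⟨x,w⟩ − ⟨x̃,u⟩⟨x̃,w⟩]| ≤ ν^{1/2} · P(‖x‖₂/√d ≥ τ)^{1/2}. -/

import Mathlib

open MeasureTheory

noncomputable section

/-- Euclidean norm of a vector in `Fin d → ℝ`. -/
def eNorm {d : ℕ} (v : Fin d → ℝ) : ℝ := Real.sqrt (∑ j, (v j) ^ 2)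

/-- Norm truncation `x̃ = (√d x/‖x‖₂) ((‖x‖₂/√d) ∧ τ)`. -/
def normTrunc {d : ℕ} (τ : ℝ) (v : Fin d → ℝ) : Fin d → ℝ :=
  fun j => (Real.sqrt d / eNorm v) * min (eNorm v / Real.sqrt d) τ * v j

lemma eNorm_nonneg {d : ℕ} (v : Fin d → ℝ) : 0 ≤ eNorm v := Real.sqrt_nonneg _

lemma eNorm_eq_zero {d : ℕ} {v : Fin d → ℝ} (h : eNorm v = 0) : ∀ j, v j = 0 := by
  have hs : (∑ j, (v j) ^ 2) ≤ 0 := Real.sqrt_eq_zero'.mp h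
  have hs0 : (∑ j, (v j) ^ 2) = 0 :=
    le_antisymm hs (Finset.sum_nonneg fun j _ => sq_nonneg _)
  intro j
  have := (Finset.sum_eq_zero_iff_of_nonneg (fun j _ => sq_nonneg (v j))).mp hs0 j
    (Finset.mem_univ j)
  exact pow_eq_zero_iff (n := 2) (by norm_num) |>.mp this

/-- Cauchy–Schwarz-type bound via AM–GM. -/
lemma sq_indicator_integral_le {Ω : Type*} [MeasurableSpace Ω] (P : Measure Ω)
    [IsProbabilityMeasure P] (a : Ω → ℝ) (ha : Measurable a) {E : Set Ω}
    (hE : MeasurableSet E) (ν : ℝ) (hν : 0 < ν)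
    (h4 : Integrable (fun ω => a ω ^ 4) P) (hb : ∫ ω, a ω ^ 4 ∂P ≤ ν) :
    ∫ ω, E.indicator (fun ω => a ω ^ 2) ω ∂P
      ≤ Real.sqrt ν * Real.sqrt ((P E).toReal) := by
  set p : ℝ := (P E).toReal with hp
  have hp0 : 0 ≤ p := ENNReal.toReal_nonneg
  rcases eq_or_lt_of_le hp0 with hp0' | hp0'
  · -- measure zero case
    have hPE : P E = 0 := by
      have hfin : P E ≠ ⊤ := measure_ne_top P E
      have := ENNReal.toReal_eq_zero_iff (P E) |>.mp hp0'.symm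
      tauto
    have : ∫ ω, E.indicator (fun ω => a ω ^ 2) ω ∂P = 0 := by
      rw [integral_indicator hE]
      rw [Measure.restrict_eq_zero.mpr hPE]
      exact integral_zero_measure _
    rw [this, ← hp0']
    simp [Real.sqrt_zero]
  · set t : ℝ := Real.sqrt (p / ν) with htdef
    have ht0 : 0 < t := Real.sqrt_pos.mpr (div_pos hp0' hν)
    have hptw : ∀ ω, E.indicator (fun ω => a ω ^ 2) ω
        ≤ (t * a ω ^ 4 + E.indicator (fun _ => (1 : ℝ)) ω / t) / 2 := by
      intro ω
      by_cases h : ω ∈ E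
      · simp only [Set.indicator_of_mem h]
        rw [le_div_iff₀ (by norm_num : (0:ℝ) < 2), ← sub_nonneg]
        have heq2 : t * a ω ^ 4 + 1 / t - a ω ^ 2 * 2
            = (t ^ 2 * a ω ^ 4 + 1 - 2 * t * a ω ^ 2) / t := by
          field_simp
        rw [heq2]
        apply div_nonneg _ ht0.le
        nlinarith [sq_nonneg (t * a ω ^ 2 - 1)]
      · simp only [Set.indicator_of_notMem h]
        positivity
    have hint_ind : Integrable (fun ω => E.indicator (fun _ => (1 : ℝ)) ω) P :=
      (integrable_const (1 : ℝ)).indicator hE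
    have hintR : Integrable
        (fun ω => (t * a ω ^ 4 + E.indicator (fun _ => (1 : ℝ)) ω / t) / 2) P :=
      ((h4.const_mul t).add (hint_ind.div_const t)).div_const 2
    have hintL : Integrable (fun ω => E.indicator (fun ω => a ω ^ 2) ω) P := by
      have ha2 : Integrable (fun ω => a ω ^ 2) P := by
        refine Integrable.mono' ((h4.add (integrable_const 1)).div_const 2)
          ((ha.pow_const 2).aestronglyMeasurable) ?_
        refine Filter.Eventually.of_forall fun ω => ?_
        rw [Real.norm_eq_abs, abs_of_nonneg (sq_nonneg _)]
        simp only [Pi.add_apply]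
        nlinarith [sq_nonneg (a ω ^ 2 - 1)]
      exact ha2.indicator hE
    have hstep : ∫ ω, E.indicator (fun ω => a ω ^ 2) ω ∂P
        ≤ (t * (∫ ω, a ω ^ 4 ∂P) + p / t) / 2 := by
      calc ∫ ω, E.indicator (fun ω => a ω ^ 2) ω ∂P
          ≤ ∫ ω, (t * a ω ^ 4 + E.indicator (fun _ => (1 : ℝ)) ω / t) / 2 ∂P :=
            integral_mono hintL hintR hptw
        _ = (t * (∫ ω, a ω ^ 4 ∂P) + (∫ ω, E.indicator (fun _ => (1 : ℝ)) ω ∂P) / t) / 2 := by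
            rw [integral_div, integral_add (h4.const_mul t) (hint_ind.div_const t),
              integral_const_mul, integral_div]
        _ = (t * (∫ ω, a ω ^ 4 ∂P) + p / t) / 2 := by
            rw [integral_indicator_const (1 : ℝ) hE]
            simp [hp, Measure.real]
    have h4i : 0 ≤ ∫ ω, a ω ^ 4 ∂P := integral_nonneg fun ω => by positivity
    have hfinal : (t * ν + p / t) / 2 = Real.sqrt ν * Real.sqrt p := by
      have hsν : Real.sqrt ν ^ 2 = ν := Real.sq_sqrt hν.le
      have hsp : Real.sqrt p ^ 2 = p := Real.sq_sqrt hp0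
      have hsν0 : 0 < Real.sqrt ν := Real.sqrt_pos.mpr hν
      have hsp0 : 0 < Real.sqrt p := Real.sqrt_pos.mpr hp0'
      have ht : t = Real.sqrt p / Real.sqrt ν := Real.sqrt_div hp0 ν
      have h1 : t * ν = Real.sqrt p * Real.sqrt ν := by
        rw [ht, div_mul_eq_mul_div, mul_div_assoc, Real.div_sqrt]
      have h2 : p / t = Real.sqrt p * Real.sqrt ν := by
        rw [ht, div_div_eq_mul_div, mul_div_right_comm, Real.div_sqrt]
      rw [h1, h2]
      ring
    calc ∫ ω, E.indicator (fun ω => a ω ^ 2) ω ∂P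
        ≤ (t * (∫ ω, a ω ^ 4 ∂P) + p / t) / 2 := hstep
      _ ≤ (t * ν + p / t) / 2 := by
          have := mul_le_mul_of_nonneg_left hb ht0.le
          linarith
      _ = Real.sqrt ν * Real.sqrt p := hfinal

/-- Second-moment bias of the norm truncation: for unit vectors `u`, `w`,
`|E[⟨x,u⟩⟨x,w⟩ − ⟨x̃,u⟩⟨x̃,w⟩]| ≤ ν^{1/2} P(‖x‖₂/√d ≥ τ)^{1/2}`. -/
theorem norm_truncation_second_moment_bias
    {Ω : Type*} [MeasurableSpace Ω] (P : Measure Ω) [IsProbabilityMeasure P]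
    {d : ℕ} (hd : 1 ≤ d)
    (x : Ω → Fin d → ℝ) (hxmeas : Measurable x)
    (ν τ : ℝ) (hν : 0 < ν) (hτ : 0 < τ)
    (hmom4 : ∀ v : Fin d → ℝ, eNorm v = 1 →
      ∫ ω, (∑ j, x ω j * v j) ^ 4 ∂P ≤ ν)
    (hint4 : ∀ v : Fin d → ℝ, Integrable (fun ω => (∑ j, x ω j * v j) ^ 4) P)
    (hint : ∀ u w : Fin d → ℝ, Integrable
      (fun ω => (∑ j, x ω j * u j) * (∑ j, x ω j * w j) -
        (∑ j, normTrunc τ (x ω) j * u j) * (∑ j, normTrunc τ (x ω) j * w j)) P) :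
    ∀ u w : Fin d → ℝ, eNorm u = 1 → eNorm w = 1 →
      |∫ ω, ((∑ j, x ω j * u j) * (∑ j, x ω j * w j) -
          (∑ j, normTrunc τ (x ω) j * u j) * (∑ j, normTrunc τ (x ω) j * w j)) ∂P|
        ≤ Real.sqrt ν * Real.sqrt (P {ω | τ ≤ eNorm (x ω) / Real.sqrt d}).toReal := by
  intro u w hu hw
  have hsd : (0 : ℝ) < Real.sqrt d := by
    apply Real.sqrt_pos.mpr
    exact_mod_cast Nat.lt_of_lt_of_le Nat.zero_lt_one hd
  set E : Set Ω := {ω | τ ≤ eNorm (x ω) / Real.sqrt d} with hEdef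
  set a : Ω → ℝ := fun ω => ∑ j, x ω j * u j with hadef
  set b : Ω → ℝ := fun ω => ∑ j, x ω j * w j with hbdef
  set c : Ω → ℝ :=
    fun ω => Real.sqrt d / eNorm (x ω) * min (eNorm (x ω) / Real.sqrt d) τ with hcdef
  -- sums over the truncation
  have hsum : ∀ ω (v : Fin d → ℝ),
      (∑ j, normTrunc τ (x ω) j * v j) = c ω * ∑ j, x ω j * v j := by
    intro ω v
    rw [Finset.mul_sum]
    exact Finset.sum_congr rfl fun j _ => by simp [normTrunc, hcdef]; ring
  -- measurability
  have hemeas : Measurable fun ω => eNorm (x ω) := by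
    have hcont : Continuous fun v : Fin d → ℝ => eNorm v := by
      unfold eNorm
      exact Real.continuous_sqrt.comp
        (continuous_finset_sum _ fun j _ => (continuous_apply j).pow 2)
    exact hcont.measurable.comp hxmeas
  have hE : MeasurableSet E :=
    measurableSet_le measurable_const (hemeas.div_const _)
  have hameas : Measurable a :=
    Finset.measurable_sum _ fun j _ => ((measurable_pi_apply j).comp hxmeas).mul_const _
  have hbmeas : Measurable b :=
    Finset.measurable_sum _ fun j _ => ((measurable_pi_apply j).comp hxmeas).mul_const _
  -- pointwise bound
  have hkey : ∀ ω,
      |a ω * b ω - (∑ j, normTrunc τ (x ω) j * u j) * (∑ j, normTrunc τ (x ω) j * w j)|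
        ≤ E.indicator (fun ω => (a ω ^ 2 + b ω ^ 2) / 2) ω := by
    intro ω
    rw [hsum ω u, hsum ω w]
    by_cases h : ω ∈ E
    · -- truncated case
      have he : 0 < eNorm (x ω) := by
        have hτ' : τ ≤ eNorm (x ω) / Real.sqrt d := h
        nlinarith [eNorm_nonneg (x ω), mul_le_mul_of_nonneg_right hτ' hsd.le,
          div_mul_cancel₀ (eNorm (x ω)) hsd.ne']
      have hc0 : 0 ≤ c ω := by
        apply mul_nonneg (div_nonneg hsd.le (eNorm_nonneg _))
        exact le_min (div_nonneg (eNorm_nonneg _) hsd.le) hτ.le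
      have hc1 : c ω ≤ 1 := by
        have h1 : c ω ≤ Real.sqrt d / eNorm (x ω) * (eNorm (x ω) / Real.sqrt d) :=
          mul_le_mul_of_nonneg_left (min_le_left _ _)
            (div_nonneg hsd.le (eNorm_nonneg _))
        have h2 : Real.sqrt d / eNorm (x ω) * (eNorm (x ω) / Real.sqrt d) = 1 := by
          field_simp
        linarith
      rw [Set.indicator_of_mem h]
      have heq : a ω * b ω - c ω * a ω * (c ω * b ω) = (1 - c ω ^ 2) * (a ω * b ω) := by
        ring
      rw [heq, abs_mul, abs_of_nonneg (by nlinarith : (0:ℝ) ≤ 1 - c ω ^ 2)]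
      have habs : |a ω * b ω| ≤ (a ω ^ 2 + b ω ^ 2) / 2 := by
        rw [abs_mul]
        nlinarith [sq_nonneg (|a ω| - |b ω|), sq_abs (a ω), sq_abs (b ω)]
      nlinarith [abs_nonneg (a ω * b ω)]
    · -- untruncated case: the truncation is the identity
      rw [Set.indicator_of_notMem h]
      have hlt : eNorm (x ω) / Real.sqrt d < τ := lt_of_not_ge h
      by_cases he : eNorm (x ω) = 0
      · have hz := eNorm_eq_zero he
        have ha0 : a ω = 0 := by
          simp only [hadef]
          exact Finset.sum_eq_zero fun j _ => by rw [hz j, zero_mul]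
        have hz2 : (∑ j, x ω j * u j) = 0 := ha0
        rw [ha0, hz2]
        simp
      · have hc : c ω = 1 := by
          rw [hcdef]
          simp only
          rw [min_eq_left hlt.le]
          field_simp
        rw [hc]
        simp [hadef, hbdef]
  -- integrability of the dominating function
  have ha2int : Integrable (fun ω => E.indicator (fun ω => a ω ^ 2) ω) P := by
    refine Integrable.indicator ?_ hE
    refine Integrable.mono' (((hint4 u).add (integrable_const 1)).div_const 2)
      ((hameas.pow_const 2).aestronglyMeasurable) ?_
    refine Filter.Eventually.of_forall fun ω => ?_
    rw [Real.norm_eq_abs, abs_of_nonneg (sq_nonneg _)]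
    simp only [Pi.add_apply]
    nlinarith [sq_nonneg (a ω ^ 2 - 1)]
  have hb2int : Integrable (fun ω => E.indicator (fun ω => b ω ^ 2) ω) P := by
    refine Integrable.indicator ?_ hE
    refine Integrable.mono' (((hint4 w).add (integrable_const 1)).div_const 2)
      ((hbmeas.pow_const 2).aestronglyMeasurable) ?_
    refine Filter.Eventually.of_forall fun ω => ?_
    rw [Real.norm_eq_abs, abs_of_nonneg (sq_nonneg _)]
    simp only [Pi.add_apply]
    nlinarith [sq_nonneg (b ω ^ 2 - 1)]
  have hgeq : (fun ω => E.indicator (fun ω => (a ω ^ 2 + b ω ^ 2) / 2) ω)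
      = fun ω => (E.indicator (fun ω => a ω ^ 2) ω + E.indicator (fun ω => b ω ^ 2) ω) / 2 := by
    funext ω
    by_cases h : ω ∈ E <;> simp [Set.indicator_of_mem, Set.indicator_of_notMem, h]
  have hgint : Integrable (fun ω => E.indicator (fun ω => (a ω ^ 2 + b ω ^ 2) / 2) ω) P := by
    rw [hgeq]
    exact (ha2int.add hb2int).div_const 2
  -- main chain
  have h1 : |∫ ω, (a ω * b ω -
      (∑ j, normTrunc τ (x ω) j * u j) * (∑ j, normTrunc τ (x ω) j * w j)) ∂P|
      ≤ ∫ ω, E.indicator (fun ω => (a ω ^ 2 + b ω ^ 2) / 2) ω ∂P := by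
    calc |∫ ω, (a ω * b ω -
        (∑ j, normTrunc τ (x ω) j * u j) * (∑ j, normTrunc τ (x ω) j * w j)) ∂P|
        ≤ ∫ ω, |a ω * b ω -
          (∑ j, normTrunc τ (x ω) j * u j) * (∑ j, normTrunc τ (x ω) j * w j)| ∂P := by
          have := norm_integral_le_integral_norm (μ := P) (f := fun ω => a ω * b ω -
            (∑ j, normTrunc τ (x ω) j * u j) * (∑ j, normTrunc τ (x ω) j * w j))
          simpa [Real.norm_eq_abs] using this
      _ ≤ ∫ ω, E.indicator (fun ω => (a ω ^ 2 + b ω ^ 2) / 2) ω ∂P :=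
          integral_mono (hint u w).abs hgint hkey
  have h2 : ∫ ω, E.indicator (fun ω => (a ω ^ 2 + b ω ^ 2) / 2) ω ∂P
      ≤ Real.sqrt ν * Real.sqrt ((P E).toReal) := by
    rw [hgeq]
    have hA := sq_indicator_integral_le P a hameas hE ν hν (hint4 u) (hmom4 u hu)
    have hB := sq_indicator_integral_le P b hbmeas hE ν hν (hint4 w) (hmom4 w hw)
    rw [integral_div, integral_add ha2int hb2int]
    linarith
  exact le_trans h1 h2

end
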